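/- For 0 < r < 1, the diversity-weighted portfolio π with πᵢ(p) = pᵢʳ / (Σⱼ pⱼʳ) is generated by Φ(p) = (Σⱼ pⱼʳ)^{1/r}, i.e. 1 + ⟨π(p)/p, q − p⟩ ≥ Φ(q)/Φ(p) for all p, q in the open unit simplex Δ ⊂ ℝⁿ. -/

import Mathlib

theorem stmt_16 (n : ℕ) (hn : 2 ≤ n) (r : ℝ) (hr : r ∈ Set.Ioo (0 : ℝ) 1)
    (Δ : Set (Fin n → ℝ))
    (hΔ : Δ = {p | (∀ i, 0 < p i) ∧ ∑ i, p i = 1})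
    (π : (Fin n → ℝ) → (Fin n → ℝ))
    (hπ : ∀ p, π p = fun i => p i ^ r / ∑ j, p j ^ r)
    (Φ : (Fin n → ℝ) → ℝ)
    (hΦ : ∀ p, Φ p = (∑ j, p j ^ r) ^ r⁻¹) :
    ∀ p ∈ Δ, ∀ q ∈ Δ,
      1 + ∑ i, (π p i / p i) * (q i - p i) ≥ Φ q / Φ p := by
  obtain ⟨hr0, hr1⟩ := hr
  subst hΔ
  rintro p ⟨hp, hps⟩ q ⟨hq, hqs⟩
  haveI : Nonempty (Fin n) := ⟨⟨0, by omega⟩⟩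
  have hne : (Finset.univ : Finset (Fin n)).Nonempty := Finset.univ_nonempty
  set S : ℝ := ∑ j, p j ^ r with hS
  set Q : ℝ := ∑ j, q j ^ r with hQ
  have hSpos : 0 < S := Finset.sum_pos (fun i _ => Real.rpow_pos_of_pos (hp i) r) hne
  have hQpos : 0 < Q := Finset.sum_pos (fun i _ => Real.rpow_pos_of_pos (hq i) r) hne
  set T : ℝ := ∑ i, q i * p i ^ (r - 1) with hT
  have hTpos : 0 < T :=
    Finset.sum_pos (fun i _ => mul_pos (hq i) (Real.rpow_pos_of_pos (hp i) _)) hne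
  -- simplify the LHS
  have hLHS : 1 + ∑ i, (π p i / p i) * (q i - p i) = T / S := by
    simp only [hπ]
    have : ∀ i : Fin n, (p i ^ r / S / p i) * (q i - p i)
        = (q i * p i ^ (r - 1)) / S - p i ^ r / S := by
      intro i
      have hpi := (hp i).ne'
      have hpr1 : p i ^ (r - 1) = p i ^ r / p i := by
        rw [Real.rpow_sub (hp i), Real.rpow_one]
      rw [hpr1]
      field_simp
    rw [Finset.sum_congr rfl fun i _ => this i]
    rw [Finset.sum_sub_distrib, ← Finset.sum_div, ← Finset.sum_div, ← hT, ← hS,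
      div_self hSpos.ne']
    ring
  rw [hLHS, hΦ, hΦ, ← hS, ← hQ, ge_iff_le]
  -- Hölder: Q ≤ T ^ r * S ^ (1 - r)
  have hconj : Real.HolderConjugate (1 / r) (1 / (1 - r)) := by
    rw [Real.holderConjugate_iff]; constructor
    · rw [lt_div_iff₀ hr0]; linarith
    · rw [one_div, one_div, inv_inv, inv_inv]; ring
  have holder := Real.inner_le_Lp_mul_Lq_of_nonneg (s := Finset.univ)
    (f := fun i => (q i * p i ^ (r - 1)) ^ r) (g := fun i => (p i ^ r) ^ (1 - r)) hconj
    (fun i _ => Real.rpow_nonneg (mul_pos (hq i) (Real.rpow_pos_of_pos (hp i) _)).le _)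
    (fun i _ => Real.rpow_nonneg (Real.rpow_nonneg (hp i).le _) _)
  have key : Q ≤ T ^ r * S ^ (1 - r) := by
    have e1 : ∀ i : Fin n, (q i * p i ^ (r - 1)) ^ r * (p i ^ r) ^ (1 - r) = q i ^ r := by
      intro i
      rw [Real.mul_rpow (hq i).le (Real.rpow_nonneg (hp i).le _)]
      rw [← Real.rpow_mul (hp i).le, ← Real.rpow_mul (hp i).le, mul_assoc,
        ← Real.rpow_add (hp i)]
      have : (r - 1) * r + r * (1 - r) = 0 := by ring
      rw [this, Real.rpow_zero, mul_one]
    have e2 : ∀ i : Fin n, ((q i * p i ^ (r - 1)) ^ r) ^ (1 / r) = q i * p i ^ (r - 1) := by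
      intro i
      rw [← Real.rpow_mul (mul_pos (hq i) (Real.rpow_pos_of_pos (hp i) _)).le,
        mul_one_div, div_self hr0.ne', Real.rpow_one]
    have e3 : ∀ i : Fin n, ((p i ^ r) ^ (1 - r)) ^ (1 / (1 - r)) = p i ^ r := by
      intro i
      rw [← Real.rpow_mul (Real.rpow_nonneg (hp i).le _),
        mul_one_div, div_self (by linarith : (1:ℝ) - r ≠ 0), Real.rpow_one]
    calc Q = ∑ i, (q i * p i ^ (r - 1)) ^ r * (p i ^ r) ^ (1 - r) := by
            rw [hQ]; exact (Finset.sum_congr rfl fun i _ => (e1 i).symm)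
      _ ≤ (∑ i, ((q i * p i ^ (r - 1)) ^ r) ^ (1/r)) ^ (1/(1/r))
          * (∑ i, ((p i ^ r) ^ (1 - r)) ^ (1/(1-r))) ^ (1/(1/(1-r))) := holder
      _ = T ^ r * S ^ (1 - r) := by
          rw [Finset.sum_congr rfl fun i _ => e2 i, Finset.sum_congr rfl fun i _ => e3 i,
            one_div_one_div, one_div_one_div, ← hT, ← hS]
  -- conclude
  have key2 : Q ^ r⁻¹ ≤ T * S ^ ((1 - r) * r⁻¹) := by
    calc Q ^ r⁻¹ ≤ (T ^ r * S ^ (1 - r)) ^ r⁻¹ :=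
          Real.rpow_le_rpow hQpos.le key (by positivity)
      _ = T * S ^ ((1 - r) * r⁻¹) := by
          rw [Real.mul_rpow (Real.rpow_nonneg hTpos.le _) (Real.rpow_nonneg hSpos.le _),
            ← Real.rpow_mul hTpos.le, mul_inv_cancel₀ hr0.ne', Real.rpow_one,
            ← Real.rpow_mul hSpos.le]
  rw [div_le_div_iff₀ (Real.rpow_pos_of_pos hSpos _) hSpos]
  calc Q ^ r⁻¹ * S ≤ T * S ^ ((1 - r) * r⁻¹) * S := by
        exact mul_le_mul_of_nonneg_right key2 hSpos.le
    _ = T * S ^ r⁻¹ := by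
        rw [mul_assoc, ← Real.rpow_add_one hSpos.ne']
        congr 2
        field_simp
        ring
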